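/- Let M be a locally compact abelian group with a contracting automorphism α and let M' be another locally compact abelian group on which α also acts as a contracting automorphism. Then every group homomorphism f : M → M' commuting with α that is locally bounded (image of every compact set has compact closure) is continuous. -/

import Mathlib

open Filter Topology

/-- let `M`, `M'` be locally compact abelian groups with contracting
automorphisms `α`, `α'` respectively. Then every group homomorphism `f : M → M'`
intertwining `α` and `α'` that is locally bounded (images of compact sets have compact
closure) is continuous. -/
theorem stmt18 {M M' : Type*}
    [AddCommGroup M] [TopologicalSpace M] [IsTopologicalAddGroup M] [LocallyCompactSpace M]
    [AddCommGroup M'] [TopologicalSpace M'] [IsTopologicalAddGroup M']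
    [LocallyCompactSpace M']
    (α : M ≃+ M) (hc : Continuous α) (hc' : Continuous α.symm)
    (α' : M' ≃+ M') (hd : Continuous α') (hd' : Continuous α'.symm)
    (hcontr : ∀ K : Set M, IsCompact K → ∀ U ∈ 𝓝 (0 : M),
      ∀ᶠ n : ℕ in atTop, ∀ x ∈ K, (⇑α)^[n] x ∈ U)
    (hcontr' : ∀ K : Set M', IsCompact K → ∀ U ∈ 𝓝 (0 : M'),
      ∀ᶠ n : ℕ in atTop, ∀ x ∈ K, (⇑α')^[n] x ∈ U)
    (f : M →+ M') (hint : ∀ x : M, f (α x) = α' (f x))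
    (hlb : ∀ K : Set M, IsCompact K → IsCompact (closure (f '' K))) :
    Continuous f := by
  apply continuous_of_continuousAt_zero f
  rw [ContinuousAt, map_zero]
  intro V hV
  obtain ⟨K, hKcomp, hKmem⟩ := exists_compact_mem_nhds (0 : M)
  have hL := hlb K hKcomp
  obtain ⟨n, hn⟩ := (hcontr' _ hL V hV).exists
  have hcomm : ∀ (m : ℕ) (y : M), f ((⇑α)^[m] y) = (⇑α')^[m] (f y) := by
    intro m
    induction m with
    | zero => intro y; simp
    | succ k ih =>
      intro y
      rw [Function.iterate_succ_apply', Function.iterate_succ_apply', hint, ih]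
  have hli : Function.LeftInverse (⇑α)^[n] (⇑α.symm)^[n] :=
    Function.LeftInverse.iterate α.apply_symm_apply n
  have hmem : (⇑α.symm)^[n] ⁻¹' K ∈ 𝓝 (0 : M) := by
    apply (hc'.iterate n).continuousAt.preimage_mem_nhds
    rwa [Function.iterate_fixed (by simp : α.symm 0 = 0) n]
  rw [Filter.mem_map]
  refine Filter.mem_of_superset hmem ?_
  intro x hx
  have : f x ∈ V := by
    have hx' : x = (⇑α)^[n] ((⇑α.symm)^[n] x) := (hli x).symm
    rw [hx', hcomm]
    exact hn (f ((⇑α.symm)^[n] x)) (subset_closure (Set.mem_image_of_mem f hx))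
  exact this
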